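/- Let R be a real orthogonal n×n matrix whose eigenvalues are e^{iθ_l}, l = 1,…,n, with 0 < |θ_l| ≤ π for all l (i.e. 1 is not an eigenvalue of R). Then for every vector v ∈ ℝ^n and every positive integer N, ‖(1/(2N)) Σ_{j=0}^{2N-1} R^j v‖ ≤ (π / (2N · min_l |θ_l|)) · ‖v‖. -/

import Mathlib

open Matrix
open scoped Matrix.Norms.L2Operator

/-- Reinterpret a plain vector as an element of Euclidean space. -/
def toE {n : ℕ} (v : Fin n → ℝ) : EuclideanSpace ℝ (Fin n) := WithLp.toLp 2 v

lemma aux_exp_ne_one {θ : ℝ} (h0 : 0 < |θ|) (hπ : |θ| ≤ Real.pi) :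
    Complex.exp (θ * Complex.I) ≠ 1 := by
  intro h
  rw [Complex.exp_eq_one_iff] at h
  obtain ⟨k, hk⟩ := h
  have h2 : (θ : ℂ) * Complex.I = ((k * (2 * Real.pi) : ℝ) : ℂ) * Complex.I := by
    rw [hk]; push_cast; ring
  have hθ : θ = k * (2 * Real.pi) := by
    exact_mod_cast mul_right_cancel₀ Complex.I_ne_zero h2
  rcases eq_or_ne k 0 with rfl | hk0
  · simp [hθ] at h0
  · have h1 : (1:ℝ) ≤ |(k:ℝ)| := by exact_mod_cast Int.one_le_abs hk0
    have : 2 * Real.pi ≤ |θ| := by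
      rw [hθ, abs_mul, abs_of_pos (by positivity : (0:ℝ) < 2 * Real.pi)]
      nlinarith [Real.pi_pos]
    nlinarith [Real.pi_pos]

lemma aux_abs_exp_sub_one_ge {θ : ℝ} (h0 : 0 < |θ|) (hπ : |θ| ≤ Real.pi) :
    2 * |θ| / Real.pi ≤ ‖Complex.exp (θ * Complex.I) - 1‖ := by
  have hsq : ‖Complex.exp (θ * Complex.I) - 1‖ ^ 2 = 2 - 2 * Real.cos θ := by
    rw [← Complex.normSq_eq_norm_sq, Complex.normSq_apply]
    simp [Complex.exp_mul_I, Complex.cos_ofReal_re, Complex.sin_ofReal_re]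
    nlinarith [Real.sin_sq_add_cos_sq θ]
  have h4 : 2 - 2 * Real.cos θ = (2 * Real.sin (|θ| / 2)) ^ 2 := by
    have := Real.sin_sq_eq_half_sub (|θ| / 2)
    rw [mul_div_cancel₀ _ (two_ne_zero), Real.cos_abs] at this
    nlinarith
  have hs : |θ| / Real.pi ≤ Real.sin (|θ| / 2) := by
    have := Real.mul_le_sin (x := |θ|/2) (by positivity) (by linarith)
    calc |θ| / Real.pi = 2 / Real.pi * (|θ|/2) := by ring
    _ ≤ _ := this
  have hs0 : 0 ≤ Real.sin (|θ| / 2) := le_trans (by positivity) hs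
  have habs : ‖Complex.exp (θ * Complex.I) - 1‖ = 2 * Real.sin (|θ| / 2) := by
    have := congrArg Real.sqrt (hsq.trans h4)
    rwa [Real.sqrt_sq (norm_nonneg _), Real.sqrt_sq (by positivity)] at this
  rw [habs]
  rw [div_le_iff₀ Real.pi_pos] at *
  nlinarith [Real.pi_pos]

lemma aux_scalar_bound {θ : ℝ} (h0 : 0 < |θ|) (hπ : |θ| ≤ Real.pi) (N : ℕ) :
    ‖∑ j ∈ Finset.range (2 * N), Complex.exp (θ * Complex.I) ^ j‖
      ≤ Real.pi / |θ| := by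
  set z := Complex.exp (θ * Complex.I) with hz
  have hz1 : z ≠ 1 := aux_exp_ne_one h0 hπ
  rw [geom_sum_eq hz1, norm_div]
  have hzabs : ‖z‖ = 1 := by
    rw [hz, Complex.norm_exp]; simp [Complex.mul_I_re]
  have h2 : ‖z ^ (2*N) - 1‖ ≤ 2 := by
    calc ‖z ^ (2*N) - 1‖ ≤ ‖z ^ (2*N)‖ + 1 := by
          simpa using norm_sub_le (z ^ (2*N)) 1
    _ ≤ 2 := by rw [norm_pow, hzabs]; norm_num
  have h3 := aux_abs_exp_sub_one_ge h0 hπ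
  have hd : 0 < 2 * |θ| / Real.pi := by positivity
  calc ‖z^(2*N) - 1‖ / ‖z - 1‖
      ≤ 2 / (2 * |θ| / Real.pi) := div_le_div₀ (by norm_num) h2 hd h3
  _ = Real.pi / |θ| := by field_simp [Real.pi_ne_zero]

lemma aux_eval_charpoly {n : ℕ} (M : Matrix (Fin n) (Fin n) ℂ) (μ : ℂ) :
    M.charpoly.eval μ = (Matrix.scalar (Fin n) μ - M).det := by
  rw [Matrix.charpoly, ← Polynomial.coe_evalRingHom, RingHom.map_det]
  congr 1
  ext i j
  by_cases h : i = j <;>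
    simp [h, charmatrix_apply_eq, charmatrix_apply_ne, Matrix.scalar_apply,
      Matrix.one_apply, Matrix.diagonal_apply]

lemma aux_mem_spectrum_root {n : ℕ} (M : Matrix (Fin n) (Fin n) ℂ) (μ : ℂ)
    (h : μ ∈ spectrum ℂ M) : M.charpoly.eval μ = 0 := by
  rw [spectrum.mem_iff] at h
  rw [aux_eval_charpoly]
  by_contra hdet
  exact h ((Matrix.isUnit_iff_isUnit_det _).mpr (isUnit_iff_ne_zero.mpr hdet))

noncomputable instance auxMatCStar {n : ℕ} : CStarAlgebra (Matrix (Fin n) (Fin n) ℂ) :=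
  { Matrix.instL2OpNormedRing, Matrix.instL2OpNormedAlgebra,
    (inferInstance : StarRing (Matrix (Fin n) (Fin n) ℂ)),
    (inferInstance : CompleteSpace (Matrix (Fin n) (Fin n) ℂ)),
    Matrix.instCStarRing,
    (inferInstance : StarModule ℂ (Matrix (Fin n) (Fin n) ℂ)) with }

/-- if `R` is orthogonal with eigenvalues `e^{iθ_l}`,
`0 < |θ_l| ≤ π`, then for every `v` and `N ≥ 1`,
`‖(1/(2N)) Σ_{j<2N} R^j v‖ ≤ (π/(2N min_l |θ_l|)) ‖v‖`. -/
theorem average_orbit_bound (n : ℕ) (hn : 0 < n)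
    (R : Matrix (Fin n) (Fin n) ℝ) (hR : R * Rᵀ = 1)
    (θ : Fin n → ℝ) (hθ : ∀ l, 0 < |θ l| ∧ |θ l| ≤ Real.pi)
    (hev : (R.map (Complex.ofReal)).charpoly =
      ∏ l, (Polynomial.X - Polynomial.C (Complex.exp (θ l * Complex.I)))) :
    ∀ (v : EuclideanSpace ℝ (Fin n)) (N : ℕ), 0 < N →
      ‖(1 / (2 * (N : ℝ))) • toE (∑ j ∈ Finset.range (2 * N), (R ^ j).mulVec v)‖ ≤
        (Real.pi / (2 * (N : ℝ) *
          Finset.univ.inf' ⟨⟨0, hn⟩, Finset.mem_univ _⟩ (fun l => |θ l|))) * ‖v‖ := by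
  intro v N hN
  set θmin := Finset.univ.inf' ⟨⟨0, hn⟩, Finset.mem_univ _⟩ (fun l => |θ l|) with hθmin
  have hθmin_pos : 0 < θmin := by
    rw [hθmin]
    exact (Finset.lt_inf'_iff _).mpr fun l _ => (hθ l).1
  have hθmin_le : ∀ l, θmin ≤ |θ l| := fun l => Finset.inf'_le _ (Finset.mem_univ l)
  -- complexified matrix
  set M : Matrix (Fin n) (Fin n) ℂ := R.map Complex.ofReal with hM
  have hmap : ∀ (A : Matrix (Fin n) (Fin n) ℝ), A.map Complex.ofReal
      = Complex.ofRealHom.mapMatrix A := fun _ => rfl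
  have hstar : star M = Rᵀ.map Complex.ofReal := by
    ext i j
    simp [hM, conjTranspose_apply, Complex.conj_ofReal]
  have hRtR : Rᵀ * R = 1 := mul_eq_one_comm.mp hR
  have hMs1 : M * star M = 1 := by
    rw [hstar, hM, hmap, hmap, ← _root_.map_mul, hR, _root_.map_one]
  have hMs2 : star M * M = 1 := by
    rw [hstar, hM, hmap, hmap, ← _root_.map_mul, hRtR, _root_.map_one]
  haveI : IsStarNormal M := ⟨by rw [Commute, SemiconjBy, hMs1, hMs2]⟩
  -- spectrum description
  have hspec : ∀ μ ∈ spectrum ℂ M, ∃ l, μ = Complex.exp (θ l * Complex.I) := by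
    intro μ hμ
    have hroot := aux_mem_spectrum_root M μ hμ
    rw [hev] at hroot
    rw [Polynomial.eval_prod, Finset.prod_eq_zero_iff] at hroot
    obtain ⟨l, _, hl⟩ := hroot
    simp only [Polynomial.eval_sub, Polynomial.eval_X, Polynomial.eval_C,
      sub_eq_zero] at hl
    exact ⟨l, hl⟩
  -- the averaged sum, as a cfc
  set S : Matrix (Fin n) (Fin n) ℂ := ∑ j ∈ Finset.range (2*N), M ^ j with hS
  have hScfc : S = cfc (fun z : ℂ => ∑ j ∈ Finset.range (2*N), z ^ j) M := by
    have hfe : (fun z : ℂ => ∑ j ∈ Finset.range (2*N), z ^ j)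
        = ∑ j ∈ Finset.range (2*N), fun z : ℂ => z ^ j := by
      ext z; simp
    rw [hfe, cfc_sum (fun j (z : ℂ) => z ^ j) M _ (fun j _ => by fun_prop)]
    exact Finset.sum_congr rfl fun j _ => (cfc_pow_id M j).symm
  have hπθ : 0 ≤ Real.pi / θmin := by positivity
  have hSnorm : ‖S‖ ≤ Real.pi / θmin := by
    rw [hScfc]
    apply norm_cfc_le hπθ
    intro z hz
    obtain ⟨l, rfl⟩ := hspec z hz
    have h1 := aux_scalar_bound (hθ l).1 (hθ l).2 N
    have h2 : Real.pi / |θ l| ≤ Real.pi / θmin :=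
      div_le_div_of_nonneg_left Real.pi_pos.le hθmin_pos (hθmin_le l)
    calc ‖∑ j ∈ Finset.range (2*N), Complex.exp (θ l * Complex.I) ^ j‖
        = ‖∑ j ∈ Finset.range (2*N), Complex.exp (θ l * Complex.I) ^ j‖ := rfl
      _ ≤ Real.pi / |θ l| := h1
      _ ≤ Real.pi / θmin := h2
  -- real sum and its complexification
  set T : Matrix (Fin n) (Fin n) ℝ := ∑ j ∈ Finset.range (2*N), R ^ j with hT
  have hTS : T.map Complex.ofReal = S := by
    rw [hT, hS, hM, hmap]
    simp only [map_sum, map_pow]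
    rfl
  set vc : Fin n → ℂ := fun i => (v i : ℂ) with hvc
  have hcoord : ∀ i, S.mulVec vc i = ((T.mulVec v i : ℝ) : ℂ) := by
    intro i
    rw [← hTS]
    simp [Matrix.mulVec, dotProduct, hvc, Matrix.map_apply]
  have hnorm_eq : ‖toE (T.mulVec v)‖
      = ‖(EuclideanSpace.equiv (Fin n) ℂ).symm (S.mulVec vc)‖ := by
    simp only [EuclideanSpace.norm_eq]
    congr 1
    apply Finset.sum_congr rfl
    intro i _
    have := hcoord i
    simp [toE, this, Complex.norm_real]
  have hvc_norm : ‖(EuclideanSpace.equiv (Fin n) ℂ).symm vc‖ = ‖v‖ := by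
    simp [EuclideanSpace.norm_eq, hvc]
  have key : ‖toE (T.mulVec v)‖ ≤ (Real.pi / θmin) * ‖v‖ := by
    rw [hnorm_eq]
    calc ‖(EuclideanSpace.equiv (Fin n) ℂ).symm (S.mulVec vc)‖
        ≤ ‖S‖ * ‖(EuclideanSpace.equiv (Fin n) ℂ).symm vc‖ :=
          Matrix.l2_opNorm_mulVec S ((EuclideanSpace.equiv (Fin n) ℂ).symm vc)
      _ ≤ (Real.pi / θmin) * ‖v‖ := by
          rw [hvc_norm]
          exact mul_le_mul_of_nonneg_right hSnorm (norm_nonneg v)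
  -- conclude
  have hmv : (∑ j ∈ Finset.range (2 * N), (R ^ j).mulVec v) = T.mulVec v := by
    rw [hT]
    ext i
    simp only [Matrix.mulVec, dotProduct, Finset.sum_apply, Finset.sum_mul]
    rw [Finset.sum_comm]
    exact Finset.sum_congr rfl fun x _ => by
      rw [← Finset.sum_mul]
      congr 1
      simp [Matrix.sum_apply]
  rw [hmv, norm_smul]
  have hNpos : (0:ℝ) < 2 * N := by positivity
  have habs : ‖(1 / (2 * (N:ℝ)))‖ = 1 / (2 * (N:ℝ)) := by
    rw [Real.norm_eq_abs, abs_of_pos (by positivity)]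
  rw [habs]
  have hfinal : Real.pi / (2 * (N:ℝ) * θmin) = (1 / (2 * (N:ℝ))) * (Real.pi / θmin) := by
    field_simp
  rw [hfinal, mul_assoc]
  exact mul_le_mul_of_nonneg_left key (by positivity)
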